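/- Let χ : [n] → {•, ∘} with χ^{-1}(∘) = {1 = l0 < l1 < ... < lm = n}, and let σ ≤ π in INC(χ) with π = {V1,...,Vt}. Then the Möbius function of the lattice INC(χ) factorizes over the blocks of π: μ_INC(σ, π) = Π_{s=1}^{t} μ_INC(σ|_{Vs}, 1_{Vs}), where 1_{Vs} is the one-block partition of Vs and μ_INC on the right is computed in the lattice INC(χ|_{Vs}). -/
import Mathlib


open scoped Classical

section Defs

variable {α : Type*}

/-- `P` is a partition of the finite set `S`: blocks are nonempty subsets of `S`
and every element of `S` lies in a unique block. -/
def IsPartitionOn (S : Finset α) (P : Finset (Finset α)) : Prop :=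
  (∀ B ∈ P, B.Nonempty ∧ B ⊆ S) ∧ ∀ x ∈ S, ∃! B, B ∈ P ∧ x ∈ B

/-- `P` is noncrossing: no `s₁ < r₁ < s₂ < r₂` with `s₁, s₂` in one block and
`r₁, r₂` in a different block. -/
def Noncrossing [LinearOrder α] (P : Finset (Finset α)) : Prop :=
  ∀ V ∈ P, ∀ W ∈ P, V ≠ W →
    ¬ ∃ s₁ r₁ s₂ r₂, s₁ ∈ V ∧ s₂ ∈ V ∧ r₁ ∈ W ∧ r₂ ∈ W ∧ s₁ < r₁ ∧ r₁ < s₂ ∧ s₂ < r₂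

/-- A block `V` is inner if some other block `W` has elements `s, t` with
`s < v < t` for all `v ∈ V`. -/
def IsInnerBlock [LinearOrder α] (P : Finset (Finset α)) (V : Finset α) : Prop :=
  ∃ W ∈ P, W ≠ V ∧ ∃ s ∈ W, ∃ t ∈ W, ∀ v ∈ V, s < v ∧ v < t

/-- `P` is an interval partition: no `s₁ < r < s₂` with `s₁, s₂` in one block
and `r` in a different block. -/
def IsIntervalPartition [LinearOrder α] (P : Finset (Finset α)) : Prop :=
  ∀ V ∈ P, ∀ W ∈ P, V ≠ W →
    ¬ ∃ s₁ r s₂, s₁ ∈ V ∧ s₂ ∈ V ∧ r ∈ W ∧ s₁ < r ∧ r < s₂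

/-- Reversed refinement order: every block of `P` is contained in a block of `Q`. -/
def Refines (P Q : Finset (Finset α)) : Prop := ∀ B ∈ P, ∃ C ∈ Q, B ⊆ C

/-- Noncrossing partition of the finite ordered set `S`. -/
def NCOn [LinearOrder α] (S : Finset α) (P : Finset (Finset α)) : Prop :=
  IsPartitionOn S P ∧ Noncrossing P

/-- Interval-noncrossing partition of `S` w.r.t. the coloring `χ`
(`χ k = true` means `k` is colored `∘`): a noncrossing partition such that
no `∘`-colored element lies in an inner block. -/
def INCOn [LinearOrder α] (S : Finset α) (χ : α → Bool) (P : Finset (Finset α)) : Prop :=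
  IsPartitionOn S P ∧ Noncrossing P ∧
    ∀ V ∈ P, IsInnerBlock P V → ∀ k ∈ V, χ k = false

/-- Restriction of a partition to a subset: nonempty intersections of blocks with `A`. -/
def restrictPart [DecidableEq α] (P : Finset (Finset α)) (A : Finset α) : Finset (Finset α) :=
  (P.image (· ∩ A)).filter (·.Nonempty)

end Defs

section Mobius

/-- `μ` is the Möbius function of the finite poset given by the relation `le`
restricted to the finite set `S`: it is a two-sided convolution inverse of
the zeta function. -/
def IsMobiusOn {β : Type*} (S : Finset β) (le : β → β → Prop) (μ : β → β → ℂ) : Prop :=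
  ∀ a ∈ S, ∀ b ∈ S, le a b →
    ((∑ c ∈ S.filter (fun c => le a c ∧ le c b), μ a c) = if a = b then 1 else 0) ∧
    ((∑ c ∈ S.filter (fun c => le a c ∧ le c b), μ c b) = if a = b then 1 else 0)

/-- The finite set of interval-noncrossing partitions of `S ⊆ [n]` w.r.t. `χ`. -/
noncomputable def INCset {n : ℕ} (S : Finset (Fin n)) (χ : Fin n → Bool) :
    Finset (Finset (Finset (Fin n))) :=
  Finset.univ.filter (fun Q => INCOn S χ Q)

/-- The finite set of noncrossing partitions of `S ⊆ [n]`. -/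
noncomputable def NCset {n : ℕ} (S : Finset (Fin n)) :
    Finset (Finset (Finset (Fin n))) :=
  Finset.univ.filter (fun Q => NCOn S Q)

end Mobius

section MuF
variable {β : Type*}

/-- interval of a "poset" -/
noncomputable def itv (T : Finset β) (le : β → β → Prop) (a b : β) : Finset β :=
  T.filter (fun c => le a c ∧ le c b)

noncomputable def muF (T : Finset β) (le : β → β → Prop) (a b : β) : ℂ :=
  if hab : a ≠ b ∧ a ∈ T ∧ b ∈ T ∧ le a b ∧ (∀ x ∈ T, le x x) ∧
      (∀ x ∈ T, ∀ y ∈ T, ∀ z ∈ T, le x y → le y z → le x z) ∧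
      (∀ x ∈ T, ∀ y ∈ T, le x y → le y x → x = y) then
    - ∑ c ∈ ((itv T le a b).erase b).attach, muF T le a c.1
  else if a = b then 1 else 0
termination_by (itv T le a b).card
decreasing_by
  obtain ⟨hne, haT, hbT, hab', hrefl, htrans, hanti⟩ := hab
  obtain ⟨c, hc⟩ := c
  simp only [itv, Finset.mem_erase, Finset.mem_filter] at hc
  obtain ⟨hcb, hcT, hac, hcb'⟩ := hc
  apply Finset.card_lt_card
  constructor
  · intro x hx
    simp only [itv, Finset.mem_filter] at hx ⊢
    exact ⟨hx.1, hx.2.1, htrans x hx.1 c hcT b hbT hx.2.2 hcb'⟩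
  · intro hsub
    have hbmem : b ∈ itv T le a b := by
      simp [itv, haT, hbT, hab', hrefl b hbT]
    have := hsub hbmem
    simp only [itv, Finset.mem_filter] at this
    exact hcb (hanti c hcT b hbT hcb' this.2.2)

variable {T : Finset β} {le : β → β → Prop}

structure PosetOn (T : Finset β) (le : β → β → Prop) : Prop where
  refl : ∀ x ∈ T, le x x
  trans : ∀ x ∈ T, ∀ y ∈ T, ∀ z ∈ T, le x y → le y z → le x z
  anti : ∀ x ∈ T, ∀ y ∈ T, le x y → le y x → x = y

lemma muF_self (a : β) : muF T le a a = 1 := by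
  rw [muF]; simp

lemma muF_eq (hp : PosetOn T le) (a b : β) (hne : a ≠ b) (ha : a ∈ T) (hb : b ∈ T)
    (hab : le a b) :
    muF T le a b = - ∑ c ∈ (itv T le a b).erase b, muF T le a c := by
  rw [muF]
  rw [dif_pos ⟨hne, ha, hb, hab, hp.refl, hp.trans, hp.anti⟩]
  rw [← Finset.sum_attach ((itv T le a b).erase b) (fun c => muF T le a c)]

lemma muF_sum (hp : PosetOn T le) (a b : β) (ha : a ∈ T) (hb : b ∈ T) (hab : le a b) :
    ∑ c ∈ itv T le a b, muF T le a c = if a = b then 1 else 0 := by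
  by_cases h : a = b
  · subst h
    have : itv T le a a = {a} := by
      ext x
      simp only [itv, Finset.mem_filter, Finset.mem_singleton]
      constructor
      · rintro ⟨hx, h1, h2⟩; exact hp.anti x hx a ha h2 h1
      · rintro rfl; exact ⟨ha, hp.refl _ ha, hp.refl _ ha⟩
    rw [this]; simp [muF_self]
  · have hbmem : b ∈ itv T le a b := by simp [itv, hb, hab, hp.refl b hb]
    rw [← Finset.add_sum_erase _ _ hbmem, muF_eq hp a b h ha hb hab]
    simp [h]

lemma muF_unique (hp : PosetOn T le) (g : β → β → ℂ)
    (hg : ∀ a ∈ T, ∀ b ∈ T, le a b →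
      ∑ c ∈ itv T le a b, g a c = if a = b then 1 else 0) :
    ∀ a ∈ T, ∀ b ∈ T, le a b → g a b = muF T le a b := by
  suffices h : ∀ N, ∀ a ∈ T, ∀ b ∈ T, le a b → (itv T le a b).card ≤ N → g a b = muF T le a b by
    intro a ha b hb hab
    exact h _ a ha b hb hab le_rfl
  intro N
  induction N with
  | zero =>
    intro a ha b hb hab hcard
    exfalso
    have hbmem : b ∈ itv T le a b := by simp [itv, hb, hab, hp.refl b hb]
    have := Finset.card_pos.mpr ⟨b, hbmem⟩
    omega
  | succ N ih =>
    intro a ha b hb hab hcard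
    by_cases h : a = b
    · subst h
      have h1 := hg a ha a ha (hp.refl a ha)
      have h2 := muF_sum hp a a ha ha (hp.refl a ha)
      have : itv T le a a = {a} := by
        ext x
        simp only [itv, Finset.mem_filter, Finset.mem_singleton]
        constructor
        · rintro ⟨hx, hx1, hx2⟩; exact hp.anti x hx a ha hx2 hx1
        · rintro rfl; exact ⟨ha, hp.refl _ ha, hp.refl _ ha⟩
      rw [this] at h1
      simp at h1
      rw [h1, muF_self]
    · have hbmem : b ∈ itv T le a b := by simp [itv, hb, hab, hp.refl b hb]
      have h1 := hg a ha b hb hab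
      rw [← Finset.add_sum_erase _ _ hbmem] at h1
      simp only [h, if_false] at h1
      have herase : ∀ c ∈ (itv T le a b).erase b, g a c = muF T le a c := by
        intro c hc
        simp only [itv, Finset.mem_erase, Finset.mem_filter] at hc
        obtain ⟨hcb, hcT, hac, hcb'⟩ := hc
        apply ih a ha c hcT hac
        have hlt : (itv T le a c).card < (itv T le a b).card := by
          apply Finset.card_lt_card
          constructor
          · intro x hx
            simp only [itv, Finset.mem_filter] at hx ⊢
            exact ⟨hx.1, hx.2.1, hp.trans x hx.1 c hcT b hb hx.2.2 hcb'⟩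
          · intro hsub
            have := hsub hbmem
            simp only [itv, Finset.mem_filter] at this
            exact hcb (hp.anti c hcT b hb hcb' this.2.2)
        omega
      rw [Finset.sum_congr rfl herase] at h1
      have h2 := muF_sum hp a b ha hb hab
      rw [← Finset.add_sum_erase _ _ hbmem] at h2
      simp only [h, if_false] at h2
      exact add_right_cancel (h1.trans h2.symm)

end MuF

section Parts
variable {α : Type*} [DecidableEq α] [LinearOrder α]

lemma refines_refl (P : Finset (Finset α)) : Refines P P :=
  fun B hB => ⟨B, hB, Finset.Subset.refl B⟩

lemma refines_trans {P Q R : Finset (Finset α)} (h1 : Refines P Q) (h2 : Refines Q R) :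
    Refines P R := by
  intro B hB
  obtain ⟨C, hC, hBC⟩ := h1 B hB
  obtain ⟨D, hD, hCD⟩ := h2 C hC
  exact ⟨D, hD, hBC.trans hCD⟩

lemma part_unique {S : Finset α} {P : Finset (Finset α)} (hP : IsPartitionOn S P)
    {B C : Finset α} (hB : B ∈ P) (hC : C ∈ P) {x : α} (hxB : x ∈ B) (hxC : x ∈ C) :
    B = C := by
  have hxS : x ∈ S := (hP.1 B hB).2 hxB
  obtain ⟨D, _, hD⟩ := hP.2 x hxS
  exact (hD B ⟨hB, hxB⟩).trans (hD C ⟨hC, hxC⟩).symm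

lemma refines_subset {S : Finset α} {P Q : Finset (Finset α)} (hP : IsPartitionOn S P)
    (hQ : IsPartitionOn S Q) (h1 : Refines P Q) (h2 : Refines Q P) : P ⊆ Q := by
  intro B hB
  obtain ⟨C, hC, hBC⟩ := h1 B hB
  obtain ⟨D, hD, hCD⟩ := h2 C hC
  obtain ⟨x, hx⟩ := (hP.1 B hB).1
  have hBD : B = D := part_unique hP hB hD hx (hCD (hBC hx))
  have hCB : C = B := Finset.Subset.antisymm (hBD ▸ hCD) hBC
  exact hCB ▸ hC

lemma refines_antisymm {S : Finset α} {P Q : Finset (Finset α)} (hP : IsPartitionOn S P)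
    (hQ : IsPartitionOn S Q) (h1 : Refines P Q) (h2 : Refines Q P) : P = Q :=
  Finset.Subset.antisymm (refines_subset hP hQ h1 h2) (refines_subset hQ hP h2 h1)

lemma restrict_eq_filter {S V : Finset α} {τ π : Finset (Finset α)}
    (hτ : IsPartitionOn S τ) (hπ : IsPartitionOn S π) (hre : Refines τ π) (hV : V ∈ π) :
    restrictPart τ V = τ.filter (· ⊆ V) := by
  ext C
  simp only [restrictPart, Finset.mem_filter, Finset.mem_image]
  constructor
  · rintro ⟨⟨B, hB, rfl⟩, hne⟩
    obtain ⟨x, hx⟩ := hne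
    obtain ⟨W, hW, hBW⟩ := hre B hB
    have hxB : x ∈ B := (Finset.mem_inter.mp hx).1
    have hxV : x ∈ V := (Finset.mem_inter.mp hx).2
    have hWV : W = V := part_unique hπ hW hV (hBW hxB) hxV
    have hBV : B ⊆ V := hWV ▸ hBW
    rw [Finset.inter_eq_left.mpr hBV]
    exact ⟨hB, hBV⟩
  · rintro ⟨hC, hCV⟩
    refine ⟨⟨C, hC, Finset.inter_eq_left.mpr hCV⟩, ?_⟩
    exact (hτ.1 C hC).1

lemma restrict_subset {S V : Finset α} {τ π : Finset (Finset α)}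
    (hτ : IsPartitionOn S τ) (hπ : IsPartitionOn S π) (hre : Refines τ π) (hV : V ∈ π) :
    restrictPart τ V ⊆ τ := by
  rw [restrict_eq_filter hτ hπ hre hV]; exact Finset.filter_subset _ _

lemma restrict_partition {S V : Finset α} {τ π : Finset (Finset α)}
    (hτ : IsPartitionOn S τ) (hπ : IsPartitionOn S π) (hre : Refines τ π) (hV : V ∈ π) :
    IsPartitionOn V (restrictPart τ V) := by
  rw [restrict_eq_filter hτ hπ hre hV]
  constructor
  · intro B hB
    simp only [Finset.mem_filter] at hB
    exact ⟨(hτ.1 B hB.1).1, hB.2⟩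
  · intro x hxV
    have hxS : x ∈ S := (hπ.1 V hV).2 hxV
    obtain ⟨B, ⟨hB, hxB⟩, huniq⟩ := hτ.2 x hxS
    have hBV : B ⊆ V := by
      obtain ⟨W, hW, hBW⟩ := hre B hB
      exact (part_unique hπ hW hV (hBW hxB) hxV) ▸ hBW
    refine ⟨B, ⟨Finset.mem_filter.mpr ⟨hB, hBV⟩, hxB⟩, ?_⟩
    intro C hC
    exact huniq C ⟨(Finset.mem_filter.mp hC.1).1, hC.2⟩

lemma noncrossing_of_subset {P Q : Finset (Finset α)} (h : P ⊆ Q) (hQ : Noncrossing Q) :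
    Noncrossing P := fun V hV W hW hne => hQ V (h hV) W (h hW) hne

lemma restrict_INCOn {S V : Finset α} {χ : α → Bool} {τ π : Finset (Finset α)}
    (hτ : INCOn S χ τ) (hπ : IsPartitionOn S π) (hre : Refines τ π) (hV : V ∈ π) :
    INCOn V χ (restrictPart τ V) := by
  have hsub : restrictPart τ V ⊆ τ := restrict_subset hτ.1 hπ hre hV
  refine ⟨restrict_partition hτ.1 hπ hre hV, noncrossing_of_subset hsub hτ.2.1, ?_⟩
  intro B hB hinner k hk
  apply hτ.2.2 B (hsub hB) _ k hk
  obtain ⟨W, hW, hWB, s, hs, t, ht, hst⟩ := hinner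
  exact ⟨W, hsub hW, hWB, s, hs, t, ht, hst⟩

lemma singleton_INCOn {V : Finset α} {χ : α → Bool} (hV : V.Nonempty) : INCOn V χ {V} := by
  refine ⟨⟨?_, ?_⟩, ?_, ?_⟩
  · intro B hB
    rw [Finset.mem_singleton] at hB
    exact ⟨hB ▸ hV, hB ▸ Finset.Subset.refl V⟩
  · intro x hx
    refine ⟨V, ⟨Finset.mem_singleton_self V, hx⟩, ?_⟩
    intro B hB
    exact Finset.mem_singleton.mp hB.1
  · intro A hA B hB hne
    rw [Finset.mem_singleton] at hA hB
    exact absurd (hA.trans hB.symm) hne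
  · intro A hA hinner k hk
    obtain ⟨W, hW, hWA, _⟩ := hinner
    rw [Finset.mem_singleton] at hA hW
    exact absurd (hW.trans hA.symm) hWA

lemma refines_singleton {V : Finset α} {P : Finset (Finset α)} (h : ∀ B ∈ P, B ⊆ V) :
    Refines P {V} := fun B hB => ⟨V, Finset.mem_singleton_self V, h B hB⟩

lemma restrict_refines_singleton {S V : Finset α} {τ π : Finset (Finset α)}
    (hτ : IsPartitionOn S τ) (hπ : IsPartitionOn S π) (hre : Refines τ π) (hV : V ∈ π) :
    Refines (restrictPart τ V) {V} :=
  refines_singleton (fun B hB => ((restrict_partition hτ hπ hre hV).1 B hB).2)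

lemma restrict_refines {S V : Finset α} {σ τ π : Finset (Finset α)}
    (hσ : IsPartitionOn S σ) (hτ : IsPartitionOn S τ) (hπ : IsPartitionOn S π)
    (hστ : Refines σ τ) (hτπ : Refines τ π) (hV : V ∈ π) :
    Refines (restrictPart σ V) (restrictPart τ V) := by
  rw [restrict_eq_filter hσ hπ (refines_trans hστ hτπ) hV,
      restrict_eq_filter hτ hπ hτπ hV]
  intro B hB
  simp only [Finset.mem_filter] at hB
  obtain ⟨hBσ, hBV⟩ := hB
  obtain ⟨C, hC, hBC⟩ := hστ B hBσ
  obtain ⟨x, hx⟩ := (hσ.1 B hBσ).1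
  obtain ⟨W, hW, hCW⟩ := hτπ C hC
  have hWV : W = V := part_unique hπ hW hV (hCW (hBC hx)) (hBV hx)
  exact ⟨C, Finset.mem_filter.mpr ⟨hC, hWV ▸ hCW⟩, hBC⟩

lemma part_decomp {S : Finset α} {τ π : Finset (Finset α)}
    (hτ : IsPartitionOn S τ) (hπ : IsPartitionOn S π) (hre : Refines τ π) :
    τ = π.biUnion (fun V => restrictPart τ V) := by
  ext B
  simp only [Finset.mem_biUnion]
  constructor
  · intro hB
    obtain ⟨V, hV, hBV⟩ := hre B hB
    exact ⟨V, hV, by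
      rw [restrict_eq_filter hτ hπ hre hV]
      exact Finset.mem_filter.mpr ⟨hB, hBV⟩⟩
  · rintro ⟨V, hV, hB⟩
    exact restrict_subset hτ hπ hre hV hB

lemma restrict_top {S V : Finset α} {π : Finset (Finset α)}
    (hπ : IsPartitionOn S π) (hV : V ∈ π) : restrictPart π V = {V} := by
  rw [restrict_eq_filter hπ hπ (refines_refl π) hV]
  ext B
  simp only [Finset.mem_filter, Finset.mem_singleton]
  constructor
  · rintro ⟨hB, hBV⟩
    obtain ⟨x, hx⟩ := (hπ.1 B hB).1
    exact part_unique hπ hB hV hx (hBV hx)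
  · intro h
    rw [h]
    exact ⟨hV, Finset.Subset.refl _⟩

lemma restrict_restrict {S V W : Finset α} {σ τ π : Finset (Finset α)}
    (hσ : IsPartitionOn S σ) (hτ : IsPartitionOn S τ) (hπ : IsPartitionOn S π)
    (hστ : Refines σ τ) (hτπ : Refines τ π) (hV : V ∈ π) (hW : W ∈ restrictPart τ V) :
    restrictPart (restrictPart σ V) W = restrictPart σ W := by
  have hWτ : W ∈ τ := restrict_subset hτ hπ hτπ hV hW
  have hWV : W ⊆ V := ((restrict_partition hτ hπ hτπ hV).1 W hW).2
  have hσV : IsPartitionOn V (restrictPart σ V) :=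
    restrict_partition hσ hπ (refines_trans hστ hτπ) hV
  have hτV : IsPartitionOn V (restrictPart τ V) :=
    restrict_partition hτ hπ hτπ hV
  have hreV : Refines (restrictPart σ V) (restrictPart τ V) :=
    restrict_refines hσ hτ hπ hστ hτπ hV
  rw [restrict_eq_filter hσV hτV hreV hW,
      restrict_eq_filter hσ hπ (refines_trans hστ hτπ) hV,
      restrict_eq_filter hσ hτ hστ hWτ, Finset.filter_filter]
  apply Finset.filter_congr
  intro B _
  constructor
  · rintro ⟨_, h⟩; exact h
  · intro h; exact ⟨h.trans hWV, h⟩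

end Parts

section Glue
variable {α : Type*} [DecidableEq α] [LinearOrder α] {S : Finset α} {χ : α → Bool} {σ π : Finset (Finset α)}
  {f : Finset α → Finset (Finset α)}

lemma glue_INCOn (hπ : INCOn S χ π) (hσ : IsPartitionOn S σ) (hσπ : Refines σ π)
    (hf : ∀ V ∈ π, INCOn V χ (f V) ∧ Refines (restrictPart σ V) (f V)) :
    INCOn S χ (π.biUnion f) ∧ Refines σ (π.biUnion f) ∧ Refines (π.biUnion f) π ∧
      ∀ V ∈ π, restrictPart (π.biUnion f) V = f V := by
  have hpart : IsPartitionOn S (π.biUnion f) := by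
    constructor
    · intro B hB
      obtain ⟨V, hV, hBf⟩ := Finset.mem_biUnion.mp hB
      obtain ⟨hBne, hBV⟩ := (hf V hV).1.1.1 B hBf
      exact ⟨hBne, hBV.trans (hπ.1.1 V hV).2⟩
    · intro x hx
      obtain ⟨V, ⟨hV, hxV⟩, hVuniq⟩ := hπ.1.2 x hx
      obtain ⟨B, ⟨hBf, hxB⟩, hBuniq⟩ := (hf V hV).1.1.2 x hxV
      refine ⟨B, ⟨Finset.mem_biUnion.mpr ⟨V, hV, hBf⟩, hxB⟩, ?_⟩
      rintro C ⟨hC, hxC⟩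
      obtain ⟨W, hW, hCf⟩ := Finset.mem_biUnion.mp hC
      have hCW : C ⊆ W := ((hf W hW).1.1.1 C hCf).2
      have hWV : W = V := hVuniq W ⟨hW, hCW hxC⟩
      exact hBuniq C ⟨hWV ▸ hCf, hxC⟩
  have hnc : Noncrossing (π.biUnion f) := by
    intro B hB B' hB' hne hcross
    obtain ⟨V, hV, hBf⟩ := Finset.mem_biUnion.mp hB
    obtain ⟨V', hV', hB'f⟩ := Finset.mem_biUnion.mp hB'
    by_cases hVV : V = V'
    · subst hVV
      exact (hf V hV).1.2.1 B hBf B' hB'f hne hcross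
    · obtain ⟨s₁, r₁, s₂, r₂, hs₁, hs₂, hr₁, hr₂, h1, h2, h3⟩ := hcross
      have hBV := ((hf V hV).1.1.1 B hBf).2
      have hB'V' := ((hf V' hV').1.1.1 B' hB'f).2
      exact hπ.2.1 V hV V' hV' hVV
        ⟨s₁, r₁, s₂, r₂, hBV hs₁, hBV hs₂, hB'V' hr₁, hB'V' hr₂, h1, h2, h3⟩
  have hdisj : ∀ V ∈ π, ∀ W ∈ π, V ≠ W → ∀ x, x ∈ V → x ∉ W := by
    intro V hV W hW hne x hxV hxW
    exact hne (part_unique hπ.1 hV hW hxV hxW)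
  have hinner : ∀ B ∈ π.biUnion f, IsInnerBlock (π.biUnion f) B → ∀ k ∈ B, χ k = false := by
    intro B hB hin k hk
    obtain ⟨V, hV, hBf⟩ := Finset.mem_biUnion.mp hB
    obtain ⟨W, hW, hWB, s, hs, t, ht, hst⟩ := hin
    obtain ⟨V', hV', hWf⟩ := Finset.mem_biUnion.mp hW
    have hBV := ((hf V hV).1.1.1 B hBf).2
    have hWV' := ((hf V' hV').1.1.1 W hWf).2
    by_cases hVV : V' = V
    · subst hVV
      exact (hf V' hV').1.2.2 B hBf ⟨W, hWf, hWB, s, hs, t, ht, hst⟩ k hk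
    · obtain ⟨b, hb⟩ := ((hf V hV).1.1.1 B hBf).1
      have hsb : s < b := (hst b hb).1
      have hbt : b < t := (hst b hb).2
      have hVne : V ≠ V' := fun e => hVV e.symm
      have key : ∀ v ∈ V, s < v ∧ v < t := by
        intro v hv
        constructor
        · by_contra hns
          push_neg at hns
          have hvs : v < s := lt_of_le_of_ne hns (fun e => hdisj V hV V' hV' hVne v hv (e ▸ hWV' hs))
          exact hπ.2.1 V hV V' hV' hVne
            ⟨v, s, b, t, hv, hBV hb, hWV' hs, hWV' ht, hvs, hsb, hbt⟩
        · by_contra hns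
          push_neg at hns
          have htv : t < v := lt_of_le_of_ne hns (fun e => hdisj V hV V' hV' hVne v hv (e ▸ hWV' ht))
          exact hπ.2.1 V' hV' V hV hVV
            ⟨s, b, t, v, hWV' hs, hWV' ht, hBV hb, hv, hsb, hbt, htv⟩
      have hVin : IsInnerBlock π V := ⟨V', hV', hVV, s, hWV' hs, t, hWV' ht, key⟩
      exact hπ.2.2 V hV hVin k (hBV hk)
  have hreπ : Refines (π.biUnion f) π := by
    intro B hB
    obtain ⟨V, hV, hBf⟩ := Finset.mem_biUnion.mp hB
    exact ⟨V, hV, ((hf V hV).1.1.1 B hBf).2⟩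
  have hglue : INCOn S χ (π.biUnion f) := ⟨hpart, hnc, hinner⟩
  have hσglue : Refines σ (π.biUnion f) := by
    intro B hB
    obtain ⟨V, hV, hBV⟩ := hσπ B hB
    have hBr : B ∈ restrictPart σ V := by
      rw [restrict_eq_filter hσ hπ.1 hσπ hV]
      exact Finset.mem_filter.mpr ⟨hB, hBV⟩
    obtain ⟨C, hC, hBC⟩ := (hf V hV).2 B hBr
    exact ⟨C, Finset.mem_biUnion.mpr ⟨V, hV, hC⟩, hBC⟩
  refine ⟨hglue, hσglue, hreπ, ?_⟩
  intro V hV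
  rw [restrict_eq_filter hpart hπ.1 hreπ hV]
  ext B
  simp only [Finset.mem_filter, Finset.mem_biUnion]
  constructor
  · rintro ⟨⟨V', hV', hBf⟩, hBV⟩
    obtain ⟨x, hx⟩ := ((hf V' hV').1.1.1 B hBf).1
    have hVV : V' = V := part_unique hπ.1 hV' hV (((hf V' hV').1.1.1 B hBf).2 hx) (hBV hx)
    exact hVV ▸ hBf
  · intro hBf
    exact ⟨⟨V, hV, hBf⟩, ((hf V hV).1.1.1 B hBf).2⟩

end Glue

section Main
variable {n : ℕ}

lemma mem_INCset {S : Finset (Fin n)} {χ : Fin n → Bool} {τ : Finset (Finset (Fin n))} :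
    τ ∈ INCset S χ ↔ INCOn S χ τ := by simp [INCset]

lemma posetOn_INCset (S : Finset (Fin n)) (χ : Fin n → Bool) :
    PosetOn (INCset S χ) Refines where
  refl := fun x _ => refines_refl x
  trans := fun x _ y _ z _ => refines_trans
  anti := fun x hx y hy => refines_antisymm (mem_INCset.mp hx).1 (mem_INCset.mp hy).1

lemma singleton_mem_INCset {V : Finset (Fin n)} {χ : Fin n → Bool} (hV : V.Nonempty) :
    ({V} : Finset (Finset (Fin n))) ∈ INCset V χ := mem_INCset.mpr (singleton_INCOn hV)

set_option maxHeartbeats 2000000 in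
lemma factorize_aux (χ : Fin n → Bool) :
    ∀ N : ℕ, ∀ S : Finset (Fin n), ∀ σ π : Finset (Finset (Fin n)),
      INCOn S χ π → INCOn S χ σ → Refines σ π →
      (itv (INCset S χ) Refines σ π).card ≤ N →
      muF (INCset S χ) Refines σ π =
        ∏ V ∈ π, muF (INCset V χ) Refines (restrictPart σ V) {V} := by
  intro N
  induction N with
  | zero =>
    intro S σ π hπ hσ hle hcard
    exfalso
    have hmem : σ ∈ itv (INCset S χ) Refines σ π := by
      simp only [itv, Finset.mem_filter]
      exact ⟨mem_INCset.mpr hσ, refines_refl σ, hle⟩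
    have := Finset.card_pos.mpr ⟨σ, hmem⟩
    omega
  | succ N ih =>
    intro S σ π hπ hσ hle hcard
    by_cases hσπ : σ = π
    · rw [hσπ, muF_self]
      have hone : ∀ V ∈ π, muF (INCset V χ) Refines (restrictPart π V) {V} = 1 := by
        intro V hV
        rw [restrict_top hπ.1 hV, muF_self]
      rw [Finset.prod_congr rfl hone, Finset.prod_const_one]
    · have hp := posetOn_INCset S χ
      have hσT : σ ∈ INCset S χ := mem_INCset.mpr hσ
      have hπT : π ∈ INCset S χ := mem_INCset.mpr hπ
      have hπitv : π ∈ itv (INCset S χ) Refines σ π := by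
        simp only [itv, Finset.mem_filter]
        exact ⟨hπT, hle, refines_refl π⟩
      -- claim 3: for τ in the open interval, muF σ τ factorizes over blocks of π
      have claim3 : ∀ τ ∈ (itv (INCset S χ) Refines σ π).erase π,
          muF (INCset S χ) Refines σ τ =
            ∏ V ∈ π, muF (INCset V χ) Refines (restrictPart σ V) (restrictPart τ V) := by
        intro τ hτmem
        rw [Finset.mem_erase] at hτmem
        obtain ⟨hτπ, hτitv⟩ := hτmem
        rw [itv, Finset.mem_filter] at hτitv
        obtain ⟨hτT, hστ, hτπ'⟩ := hτitv
        have hτINC : INCOn S χ τ := mem_INCset.mp hτT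
        have hss : itv (INCset S χ) Refines σ τ ⊂ itv (INCset S χ) Refines σ π := by
          constructor
          · intro x hx
            simp only [itv, Finset.mem_filter] at hx ⊢
            exact ⟨hx.1, hx.2.1, refines_trans hx.2.2 hτπ'⟩
          · intro hsub
            have hπmem := hsub hπitv
            simp only [itv, Finset.mem_filter] at hπmem
            exact hτπ (refines_antisymm hτINC.1 hπ.1 hτπ' hπmem.2.2)
        have hcard2 : (itv (INCset S χ) Refines σ τ).card ≤ N := by
          have := Finset.card_lt_card hss
          omega
        have hstep1 := ih S σ τ hτINC hσ hστ hcard2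
        have hdecomp := part_decomp hτINC.1 hπ.1 hτπ'
        have hpd : Set.PairwiseDisjoint ↑π (fun V => restrictPart τ V) := by
          intro a ha b hb hne
          simp only [Function.onFun]
          rw [Finset.disjoint_left]
          intro B hBa hBb
          have h1 := (restrict_partition hτINC.1 hπ.1 hτπ' ha).1 B hBa
          have h2 := (restrict_partition hτINC.1 hπ.1 hτπ' hb).1 B hBb
          obtain ⟨x, hx⟩ := h1.1
          exact hne (part_unique hπ.1 ha hb (h1.2 hx) (h2.2 hx))
        rw [hstep1]
        calc ∏ W ∈ τ, muF (INCset W χ) Refines (restrictPart σ W) {W}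
            = ∏ V ∈ π, ∏ W ∈ restrictPart τ V,
                muF (INCset W χ) Refines (restrictPart σ W) {W} := by
              conv_lhs => rw [hdecomp]
              exact Finset.prod_biUnion hpd
          _ = ∏ V ∈ π, muF (INCset V χ) Refines (restrictPart σ V) (restrictPart τ V) := by
              apply Finset.prod_congr rfl
              intro V hV
              have hτV : INCOn V χ (restrictPart τ V) := restrict_INCOn hτINC hπ.1 hτπ' hV
              have hσV : INCOn V χ (restrictPart σ V) := restrict_INCOn hσ hπ.1 hle hV
              have hreV : Refines (restrictPart σ V) (restrictPart τ V) :=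
                restrict_refines hσ.1 hτINC.1 hπ.1 hστ hτπ' hV
              -- the gluing injection bounds the small interval's cardinality
              have key : ∀ ρ ∈ itv (INCset V χ) Refines (restrictPart σ V) (restrictPart τ V),
                  (π.biUnion (fun V' => if V' = V then ρ else restrictPart σ V')) ∈
                    itv (INCset S χ) Refines σ τ ∧
                  restrictPart (π.biUnion (fun V' => if V' = V then ρ else restrictPart σ V')) V
                    = ρ := by
                intro ρ hρ
                simp only [itv, Finset.mem_filter] at hρ
                obtain ⟨hρT, hρ1, hρ2⟩ := hρ
                have hρINC : INCOn V χ ρ := mem_INCset.mp hρT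
                have hfh : ∀ V' ∈ π, INCOn V' χ ((fun V' => if V' = V then ρ
                    else restrictPart σ V') V') ∧ Refines (restrictPart σ V')
                    ((fun V' => if V' = V then ρ else restrictPart σ V') V') := by
                  intro V' hV'
                  by_cases h : V' = V
                  · subst h
                    simp only [if_pos rfl]
                    exact ⟨hρINC, hρ1⟩
                  · simp only [if_neg h]
                    exact ⟨restrict_INCOn hσ hπ.1 hle hV', refines_refl _⟩
                obtain ⟨hg1, hg2, hg3, hg4⟩ := glue_INCOn hπ hσ.1 hle hfh
                constructor
                · simp only [itv, Finset.mem_filter]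
                  refine ⟨mem_INCset.mpr hg1, hg2, ?_⟩
                  intro B hB
                  obtain ⟨V', hV', hBf⟩ := Finset.mem_biUnion.mp hB
                  by_cases h : V' = V
                  · subst h
                    rw [if_pos rfl] at hBf
                    obtain ⟨C, hC, hBC⟩ := hρ2 B hBf
                    exact ⟨C, restrict_subset hτINC.1 hπ.1 hτπ' hV hC, hBC⟩
                  · rw [if_neg h] at hBf
                    exact hστ B (restrict_subset hσ.1 hπ.1 hle hV' hBf)
                · rw [hg4 V hV, if_pos rfl]
              have hcardV :
                  (itv (INCset V χ) Refines (restrictPart σ V) (restrictPart τ V)).card ≤ N := by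
                have hinj : (itv (INCset V χ) Refines (restrictPart σ V)
                    (restrictPart τ V)).card ≤ (itv (INCset S χ) Refines σ τ).card := by
                  apply Finset.card_le_card_of_injOn
                    (fun ρ => π.biUnion (fun V' => if V' = V then ρ else restrictPart σ V'))
                  · intro ρ hρ
                    exact (key ρ hρ).1
                  · intro ρ1 h1 ρ2 h2 heq
                    have e1 := (key ρ1 h1).2
                    have e2 := (key ρ2 h2).2
                    rw [← e1, ← e2]
                    exact congrArg (fun x => restrictPart x V) heq
                omega
              have hIH := ih V (restrictPart σ V) (restrictPart τ V) hτV hσV hreV hcardV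
              rw [hIH]
              apply Finset.prod_congr rfl
              intro W hW
              rw [restrict_restrict hσ.1 hτINC.1 hπ.1 hστ hτπ' hV hW]
      -- claim 1: the product-form function sums to zero over the interval
      have claim1 : ∑ τ ∈ itv (INCset S χ) Refines σ π,
          ∏ V ∈ π, muF (INCset V χ) Refines (restrictPart σ V) (restrictPart τ V) = 0 := by
        have hbij : ∑ τ ∈ itv (INCset S χ) Refines σ π,
            ∏ V ∈ π, muF (INCset V χ) Refines (restrictPart σ V) (restrictPart τ V)
          = ∑ fp ∈ π.pi (fun V => itv (INCset V χ) Refines (restrictPart σ V) {V}),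
              ∏ V ∈ π.attach, muF (INCset V.1 χ) Refines (restrictPart σ V.1) (fp V.1 V.2) := by
          apply Finset.sum_nbij' (i := fun τ => fun V _ => restrictPart τ V)
            (j := fun fp => π.biUnion (fun V => if h : V ∈ π then fp V h else ∅))
          · intro τ hτ
            simp only [itv, Finset.mem_filter] at hτ
            obtain ⟨hτT, hστ, hτπ'⟩ := hτ
            have hτINC : INCOn S χ τ := mem_INCset.mp hτT
            rw [Finset.mem_pi]
            intro V hV
            simp only [itv, Finset.mem_filter]
            exact ⟨mem_INCset.mpr (restrict_INCOn hτINC hπ.1 hτπ' hV),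
              restrict_refines hσ.1 hτINC.1 hπ.1 hστ hτπ' hV,
              restrict_refines_singleton hτINC.1 hπ.1 hτπ' hV⟩
          · intro fp hfp
            rw [Finset.mem_pi] at hfp
            have hfh : ∀ V ∈ π, INCOn V χ ((fun V => if h : V ∈ π then fp V h else ∅) V) ∧
                Refines (restrictPart σ V) ((fun V => if h : V ∈ π then fp V h else ∅) V) := by
              intro V hV
              have := hfp V hV
              simp only [itv, Finset.mem_filter] at this
              simp only [dif_pos hV]
              exact ⟨mem_INCset.mp this.1, this.2.1⟩
            obtain ⟨hg1, hg2, hg3, _⟩ := glue_INCOn hπ hσ.1 hle hfh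
            simp only [itv, Finset.mem_filter]
            exact ⟨mem_INCset.mpr hg1, hg2, hg3⟩
          · intro τ hτ
            simp only [itv, Finset.mem_filter] at hτ
            obtain ⟨hτT, hστ, hτπ'⟩ := hτ
            have hτINC : INCOn S χ τ := mem_INCset.mp hτT
            have hdecomp := part_decomp hτINC.1 hπ.1 hτπ'
            refine Eq.trans (Finset.biUnion_congr rfl ?_) hdecomp.symm
            intro V hV
            simp only [dif_pos hV]
          · intro fp hfp
            rw [Finset.mem_pi] at hfp
            have hfh : ∀ V ∈ π, INCOn V χ ((fun V => if h : V ∈ π then fp V h else ∅) V) ∧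
                Refines (restrictPart σ V) ((fun V => if h : V ∈ π then fp V h else ∅) V) := by
              intro V hV
              have := hfp V hV
              simp only [itv, Finset.mem_filter] at this
              simp only [dif_pos hV]
              exact ⟨mem_INCset.mp this.1, this.2.1⟩
            obtain ⟨_, _, _, hg4⟩ := glue_INCOn hπ hσ.1 hle hfh
            funext V hV
            have := hg4 V hV
            simp only [dif_pos hV] at this ⊢
            exact this
          · intro τ hτ
            exact (Finset.prod_attach π (fun V =>
              muF (INCset V χ) Refines (restrictPart σ V) (restrictPart τ V))).symm
        rw [hbij, ← Finset.prod_sum π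
          (fun V => itv (INCset V χ) Refines (restrictPart σ V) {V})
          (fun V ρ => muF (INCset V χ) Refines (restrictPart σ V) ρ)]
        obtain ⟨V0, hV0, hne0⟩ : ∃ V ∈ π, restrictPart σ V ≠ {V} := by
          by_contra hc
          push_neg at hc
          apply hσπ
          rw [part_decomp hσ.1 hπ.1 hle, Finset.biUnion_congr rfl hc]
          exact Finset.biUnion_singleton_eq_self
        apply Finset.prod_eq_zero hV0
        have hV0ne : V0.Nonempty := (hπ.1.1 V0 hV0).1
        rw [muF_sum (posetOn_INCset V0 χ) _ _
          (mem_INCset.mpr (restrict_INCOn hσ hπ.1 hle hV0))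
          (singleton_mem_INCset hV0ne)
          (restrict_refines_singleton hσ.1 hπ.1 hle hV0)]
        rw [if_neg hne0]
      -- assemble
      have h2 := muF_sum hp σ π hσT hπT hle
      rw [if_neg hσπ, ← Finset.add_sum_erase _ _ hπitv] at h2
      rw [← Finset.add_sum_erase _ _ hπitv] at claim1
      rw [Finset.sum_congr rfl (fun τ hτ => claim3 τ hτ)] at h2
      have hfin := h2.trans claim1.symm
      have := add_right_cancel hfin
      rw [this]
      exact Finset.prod_congr rfl (fun V hV => by rw [restrict_top hπ.1 hV])

end Main


/-- the Möbius function of the lattice INC(χ) factorizes over the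
blocks of π: μ_INC(σ, π) = ∏_{V ∈ π} μ_INC(σ|_V, 1_V), where the factor for the
block V is computed in the lattice INC(χ|_V). -/
theorem mobius_INC_factorizes {n : ℕ} (hn : 0 < n) (χ : Fin n → Bool)
    (hχ1 : χ ⟨0, hn⟩ = true) (hχn : χ ⟨n - 1, Nat.sub_lt hn one_pos⟩ = true)
    (π σ : Finset (Finset (Fin n)))
    (hπ : INCOn Finset.univ χ π) (hσ : INCOn Finset.univ χ σ) (hle : Refines σ π)
    (μ : Finset (Finset (Fin n)) → Finset (Finset (Fin n)) → ℂ)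
    (hμ : IsMobiusOn (INCset Finset.univ χ) Refines μ)
    (μ' : Finset (Fin n) → Finset (Finset (Fin n)) → Finset (Finset (Fin n)) → ℂ)
    (hμ' : ∀ V ∈ π, IsMobiusOn (INCset V χ) Refines (μ' V)) :
    μ σ π = ∏ V ∈ π, μ' V (restrictPart σ V) {V} := by
  have hp := posetOn_INCset (Finset.univ : Finset (Fin n)) χ
  have hσT : σ ∈ INCset Finset.univ χ := mem_INCset.mpr hσ
  have hπT : π ∈ INCset Finset.univ χ := mem_INCset.mpr hπ
  have h1 : μ σ π = muF (INCset Finset.univ χ) Refines σ π := by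
    apply muF_unique hp μ ?_ σ hσT π hπT hle
    intro a ha b hb hab
    exact (hμ a ha b hb hab).1
  rw [h1, factorize_aux χ (itv (INCset Finset.univ χ) Refines σ π).card Finset.univ σ π
    hπ hσ hle le_rfl]
  apply Finset.prod_congr rfl
  intro V hV
  have hVne : V.Nonempty := (hπ.1.1 V hV).1
  have hpV := posetOn_INCset V χ
  have hσV : restrictPart σ V ∈ INCset V χ := mem_INCset.mpr (restrict_INCOn hσ hπ.1 hle hV)
  have hsV : ({V} : Finset (Finset (Fin n))) ∈ INCset V χ := singleton_mem_INCset hVne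
  have hrV : Refines (restrictPart σ V) {V} := restrict_refines_singleton hσ.1 hπ.1 hle hV
  exact (muF_unique hpV (μ' V) (fun a ha b hb hab => (hμ' V hV a ha b hb hab).1)
    (restrictPart σ V) hσV {V} hsV hrV).symm
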